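/- Let (L, [−,−]) and (L', [−,−]') be Leibniz algebras over a field F, λ, μ : L → L and λ', μ' : L' → L' linear maps, s ∈ L, s' ∈ L', with bi-affine brackets {a,b} = [a,b] + λ(a) + μ(b) + s and {x,y}' = [x,y]' + λ'(x) + μ'(y) + s'. Then there exists a bijective affine map φ : L → L' (φ(x) = ψ(x) + q' with ψ linear bijective) with φ({a,b}) = {φ(a), φ(b)}' for all a, b, if and only if there exist a bijective linear map ψ : L → L' with ψ([a,b]) = [ψ(a), ψ(b)]' for all a, b, and a point q ∈ L, such that: s' = ψ(s − λ(q) − μ(q) + [q,q] + q); μ'(ψ(x)) = ψ(μ(x) − [q,x]) for all x ∈ L; and λ'(ψ(x)) = ψ(λ(x) − [x,q]) for all x ∈ L. -/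
import Mathlib


/-- Characterization of isomorphisms between Leibniz affgebras `a(L;lam,mu,s)` and
`a(L';lam',mu',s')`: there exists a bijective affine map `φ(x) = ψ(x) + q'` preserving
the bi-affine brackets if and only if there exist a Leibniz algebra isomorphism
`ψ : L → L'` and a point `q ∈ L` satisfying the three compatibility conditions. -/
theorem leibniz_affgebra_isomorphism_characterization
    {F L L' : Type*} [Field F] [AddCommGroup L] [Module F L]
    [AddCommGroup L'] [Module F L']
    (B : L →ₗ[F] L →ₗ[F] L) (B' : L' →ₗ[F] L' →ₗ[F] L')
    (leib : ∀ a b c : L, B (B a b) c = B (B a c) b + B a (B b c))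
    (leib' : ∀ a b c : L', B' (B' a b) c = B' (B' a c) b + B' a (B' b c))
    (lam mu : L →ₗ[F] L) (lam' mu' : L' →ₗ[F] L') (s : L) (s' : L')
    (br : L → L → L) (hbr : ∀ a b, br a b = B a b + lam a + mu b + s)
    (br' : L' → L' → L') (hbr' : ∀ a b, br' a b = B' a b + lam' a + mu' b + s') :
    (∃ (ψ : L →ₗ[F] L') (q' : L'), Function.Bijective ψ ∧
        ∀ a b : L, ψ (br a b) + q' = br' (ψ a + q') (ψ b + q')) ↔
    (∃ (ψ : L →ₗ[F] L') (q : L), Function.Bijective ψ ∧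
        (∀ a b : L, ψ (B a b) = B' (ψ a) (ψ b)) ∧
        s' = ψ (s - lam q - mu q + B q q + q) ∧
        (∀ x : L, mu' (ψ x) = ψ (mu x - B q x)) ∧
        (∀ x : L, lam' (ψ x) = ψ (lam x - B x q))) := by
  constructor
  · rintro ⟨ψ, q', hbij, h⟩
    obtain ⟨q, rfl⟩ := hbij.2 q'
    simp only [hbr, hbr', map_add, LinearMap.add_apply] at h
    have key : ∀ a b : L, ψ (B a b) = B' (ψ a) (ψ b) := by
      intro a b
      have h1 := h a b
      have h2 := h a 0
      have h3 := h 0 b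
      have h4 := h 0 0
      simp only [map_zero, LinearMap.zero_apply, add_zero, zero_add] at h1 h2 h3 h4
      linear_combination (norm := module) h1 - h2 - h3 + h4
    have hlam : ∀ x : L, lam' (ψ x) = ψ (lam x - B x q) := by
      intro x
      have h1 := h x 0
      have h4 := h 0 0
      simp only [map_zero, LinearMap.zero_apply, add_zero, zero_add, ← key] at h1 h4
      simp only [map_sub]
      linear_combination (norm := module) h4 - h1
    have hmu : ∀ x : L, mu' (ψ x) = ψ (mu x - B q x) := by
      intro x
      have h1 := h 0 x
      have h4 := h 0 0
      simp only [map_zero, LinearMap.zero_apply, add_zero, zero_add, ← key] at h1 h4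
      simp only [map_sub]
      linear_combination (norm := module) h4 - h1
    refine ⟨ψ, q, hbij, key, ?_, hmu, hlam⟩
    have h4 := h 0 0
    have hl := hlam q
    have hm := hmu q
    simp only [map_zero, LinearMap.zero_apply, add_zero, zero_add, ← key] at h4
    simp only [map_sub] at hl hm
    simp only [map_add, map_sub]
    linear_combination (norm := module) -h4 - hl - hm
  · rintro ⟨ψ, q, hbij, hB, hs', hmu, hlam⟩
    refine ⟨ψ, ψ q, hbij, ?_⟩
    intro a b
    simp only [hbr, hbr', map_add, LinearMap.add_apply, hlam, hmu, hs', ← hB, map_sub]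
    abel
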